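/- Suppose X = μ₀ + Σₖ λₖ^{1/2} Zₖ φₖ almost surely, where the series converges almost surely in H, {φₖ} is an orthonormal system in H, λₖ > 0 with Σₖ λₖ < ∞, and the real random variables Zₖ are independent, identically distributed, and each symmetrically distributed about 0. If α ∈ (0, 1/2] and β ∈ (0, 1/2], then λⱼ = λₖ implies E_P[w_P(X)⟨φⱼ, X − μ₀⟩²] = E_P[w_P(X)⟨φₖ, X − μ₀⟩²]; that is, equal eigenvalues of the expansion yield equal trimmed eigenvalues λ̃ⱼ = λ̃ₖ. -/

import Mathlib

open MeasureTheory
open scoped RealInnerProductSpace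

/-- `F_P(t; v) = P(‖X − v‖ ≤ t)`. -/
noncomputable def Fpop {H : Type*} [NormedAddCommGroup H] [MeasurableSpace H]
    (P : Measure H) (t : ℝ) (v : H) : ℝ :=
  (P {x | ‖x - v‖ ≤ t}).toReal

/-- The α-radius `r_P(v) = inf {t ≥ 0 : F_P(t; v) ≥ α}`. -/
noncomputable def rpop {H : Type*} [NormedAddCommGroup H] [MeasurableSpace H]
    (α : ℝ) (P : Measure H) (v : H) : ℝ :=
  sInf {t : ℝ | 0 ≤ t ∧ α ≤ Fpop P t v}

/-- `G_P(t) = P(r_P(X) ≤ t)`. -/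
noncomputable def Gpop {H : Type*} [NormedAddCommGroup H] [MeasurableSpace H]
    (α : ℝ) (P : Measure H) (t : ℝ) : ℝ :=
  (P {x | rpop α P x ≤ t}).toReal

/-- The population weight function `w_P(v) = g(G_P(r_P(v)))`. -/
noncomputable def wpop {H : Type*} [NormedAddCommGroup H] [MeasurableSpace H]
    (g : ℝ → ℝ) (α : ℝ) (P : Measure H) (v : H) : ℝ :=
  g (Gpop α P (rpop α P v))

/-- The population trimmed mean `μ(P) = E_P[w_P(X)X] / E_P[w_P(X)]`. -/
noncomputable def meanPop {H : Type*} [NormedAddCommGroup H] [InnerProductSpace ℝ H]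
    [CompleteSpace H] [MeasurableSpace H] (g : ℝ → ℝ) (α : ℝ) (P : Measure H) : H :=
  (∫ x, wpop g α P x ∂P)⁻¹ • ∫ x, wpop g α P x • x ∂P

/-- The population trimmed covariance operator
`C(P)(h) = E_P[w_P(X)⟨X − μ(P), h⟩(X − μ(P))] / E_P[w_P(X)]`. -/
noncomputable def covPop {H : Type*} [NormedAddCommGroup H] [InnerProductSpace ℝ H]
    [CompleteSpace H] [MeasurableSpace H] (g : ℝ → ℝ) (α : ℝ) (P : Measure H) (h : H) : H :=
  (∫ x, wpop g α P x ∂P)⁻¹ •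
    ∫ x, (wpop g α P x * ⟪x - meanPop g α P, h⟫) • (x - meanPop g α P) ∂P

section swapL
variable {H : Type*} [NormedAddCommGroup H] [InnerProductSpace ℝ H]

/-- The continuous linear map swapping two orthonormal directions `e` and `f`. -/
noncomputable def swapL (e f : H) : H →L[ℝ] H :=
  ContinuousLinearMap.id ℝ H + ((innerSL ℝ f - innerSL ℝ e).smulRight e)
    + ((innerSL ℝ e - innerSL ℝ f).smulRight f)

lemma swapL_apply (e f u : H) :
    swapL e f u = u + (⟪f, u⟫ - ⟪e, u⟫) • e + (⟪e, u⟫ - ⟪f, u⟫) • f := by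
  simp [swapL, sub_smul]

variable {e f : H} (he : ⟪e, e⟫ = 1) (hf : ⟪f, f⟫ = 1) (hef : ⟪e, f⟫ = 0) (hfe : ⟪f, e⟫ = 0)

include he hef in
lemma inner_swapL_left (u : H) : ⟪e, swapL e f u⟫ = ⟪f, u⟫ := by
  have he' : ‖e‖ ^ 2 = 1 := by rw [← real_inner_self_eq_norm_sq]; exact he
  simp [swapL_apply, inner_add_right, real_inner_smul_right, he, hef, he']

include hf hfe in
lemma inner_swapL_right (u : H) : ⟪f, swapL e f u⟫ = ⟪e, u⟫ := by
  have hf' : ‖f‖ ^ 2 = 1 := by rw [← real_inner_self_eq_norm_sq]; exact hf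
  simp [swapL_apply, inner_add_right, real_inner_smul_right, hf, hfe, hf']

include he hf hef hfe in
lemma swapL_swapL (u : H) : swapL e f (swapL e f u) = u := by
  rw [swapL_apply e f (swapL e f u), inner_swapL_left he hef, inner_swapL_right hf hfe,
    swapL_apply e f u]
  module

include he hf hef hfe in
lemma norm_swapL (u : H) : ‖swapL e f u‖ = ‖u‖ := by
  have h2 : ⟪swapL e f u, swapL e f u⟫ = ⟪u, u⟫ := by
    have hue : ⟪u, e⟫ = ⟪e, u⟫ := real_inner_comm e u
    have huf : ⟪u, f⟫ = ⟪f, u⟫ := real_inner_comm f u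
    simp only [swapL_apply, inner_add_left, inner_add_right, real_inner_smul_left,
      real_inner_smul_right, he, hf, hef, hfe, hue, huf]
    ring
  have := congrArg Real.sqrt h2
  rwa [real_inner_self_eq_norm_sq, real_inner_self_eq_norm_sq, Real.sqrt_sq (norm_nonneg _),
    Real.sqrt_sq (norm_nonneg _)] at this

include he hfe in
lemma swapL_fst : swapL e f e = f := by
  have he' : ‖e‖ ^ 2 = 1 := by rw [← real_inner_self_eq_norm_sq]; exact he
  simp [swapL_apply, he, hfe, he']

include hf hef in
lemma swapL_snd : swapL e f f = e := by
  have hf' : ‖f‖ ^ 2 = 1 := by rw [← real_inner_self_eq_norm_sq]; exact hf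
  simp [swapL_apply, hf, hef, hf']

lemma swapL_ortho {g : H} (hge : ⟪e, g⟫ = 0) (hgf : ⟪f, g⟫ = 0) : swapL e f g = g := by
  simp [swapL_apply, hge, hgf]

end swapL

section law
variable {Ω : Type*} [MeasurableSpace Ω] (Q : Measure Ω) [IsProbabilityMeasure Q]
  (Z : ℕ → Ω → ℝ) (hZ : ∀ k, Measurable (Z k))
  (hindep : ProbabilityTheory.iIndepFun Z Q)
  (hid : ∀ j k : ℕ, Measure.map (Z j) Q = Measure.map (Z k) Q)

include hZ hindep hid in
lemma tuple_law (s : Finset ℕ) (τ : ℕ → ℕ) (hτ : Set.InjOn τ s) :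
    Measure.map (fun ω (i : s) => Z (τ i) ω) Q
      = Measure.pi (fun _ : s => Measure.map (Z 0) Q) := by
  haveI : IsProbabilityMeasure (Measure.map (Z 0) Q) :=
    Measure.isProbabilityMeasure_map (hZ 0).aemeasurable
  refine (Measure.pi_eq fun sets hsets => ?_).symm
  set E : ℕ → Set ℝ := fun n => ⋂ i : s, (if τ (i : ℕ) = n then sets i else Set.univ) with hE
  have hEmeas : ∀ n, MeasurableSet (E n) := by
    intro n
    refine MeasurableSet.iInter fun i => ?_
    by_cases h : τ (i : ℕ) = n <;> simp [h, hsets i]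
  have hEτ : ∀ i : s, E (τ i) = sets i := by
    intro i
    apply Set.Subset.antisymm
    · intro r hr
      have := Set.mem_iInter.1 hr i
      rwa [if_pos rfl] at this
    · intro r hr
      refine Set.mem_iInter.2 fun i' => ?_
      by_cases h' : τ (i' : ℕ) = τ (i : ℕ)
      · rw [if_pos h']
        have hii : i' = i := Subtype.ext (hτ i'.2 i.2 h')
        rwa [hii]
      · rw [if_neg h']
        trivial
  have htuple : Measurable (fun ω (i : s) => Z (τ i) ω) :=
    measurable_pi_lambda _ fun i => hZ (τ i)
  rw [Measure.map_apply htuple (MeasurableSet.univ_pi hsets)]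
  have hpre : (fun ω (i : s) => Z (τ i) ω) ⁻¹' (Set.pi Set.univ sets)
      = ⋂ n ∈ s.image τ, Z n ⁻¹' E n := by
    ext ω
    simp only [Set.mem_preimage, Set.mem_pi, Set.mem_univ, forall_true_left, Set.mem_iInter,
      Finset.mem_image, hE]
    constructor
    · rintro h n ⟨i, hi, rfl⟩
      intro i'
      by_cases h' : τ (i' : ℕ) = τ i
      · rw [if_pos h']
        have := h i'
        rwa [h'] at this
      · rw [if_neg h']
        trivial
    · intro h i
      have h2 := h (τ i) ⟨i, i.2, rfl⟩ i
      rwa [if_pos rfl] at h2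
  rw [hpre, hindep.measure_inter_preimage_eq_mul (s.image τ) (fun n _ => hEmeas n),
    Finset.prod_image (fun x hx y hy h => hτ hx hy h)]
  have key : ∀ i ∈ s.attach, Q (Z (τ (i : ℕ)) ⁻¹' E (τ (i : ℕ)))
      = Measure.map (Z 0) Q (sets i) := by
    intro i _
    rw [hEτ i, ← Measure.map_apply (hZ (τ (i : ℕ))) (hsets i), hid (τ (i : ℕ)) 0]
  rw [← Finset.prod_attach s (fun n => Q (Z (τ n) ⁻¹' E (τ n))), Finset.prod_congr rfl key,
    Finset.univ_eq_attach]

include hZ hindep hid in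
lemma seq_law (τ : ℕ → ℕ) (hτ : Function.Injective τ) :
    Measure.map (fun ω (i : ℕ) => Z (τ i) ω) Q = Measure.map (fun ω (i : ℕ) => Z i ω) Q := by
  have h1 : Measurable (fun ω (i : ℕ) => Z (τ i) ω) := measurable_pi_lambda _ fun i => hZ (τ i)
  have h2 : Measurable (fun ω (i : ℕ) => Z i ω) := measurable_pi_lambda _ fun i => hZ i
  haveI : IsProbabilityMeasure (Measure.map (fun ω (i : ℕ) => Z (τ i) ω) Q) :=
    Measure.isProbabilityMeasure_map h1.aemeasurable
  haveI : IsProbabilityMeasure (Measure.map (fun ω (i : ℕ) => Z i ω) Q) :=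
    Measure.isProbabilityMeasure_map h2.aemeasurable
  refine ext_of_generate_finite _ generateFrom_measurableCylinders.symm
    isPiSystem_measurableCylinders (fun t ht => ?_) (by simp)
  obtain ⟨s, S, hS, rfl⟩ := (mem_measurableCylinders t).1 ht
  have hcyl : MeasurableSet (cylinder (α := fun _ : ℕ => ℝ) s S) :=
    MeasurableSet.of_mem_measurableCylinders (α := fun _ : ℕ => ℝ) (cylinder_mem_measurableCylinders (α := fun _ : ℕ => ℝ) s S hS)
  rw [Measure.map_apply h1 hcyl, Measure.map_apply h2 hcyl]
  have e1 : (fun ω (i : ℕ) => Z (τ i) ω) ⁻¹' cylinder s S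
      = (fun ω (i : s) => Z (τ (i : ℕ)) ω) ⁻¹' S := rfl
  have e2 : (fun ω (i : ℕ) => Z i ω) ⁻¹' cylinder s S
      = (fun ω (i : s) => Z (i : ℕ) ω) ⁻¹' S := rfl
  rw [e1, e2,
    ← Measure.map_apply (measurable_pi_lambda _ fun i : s => hZ (τ (i : ℕ))) hS,
    ← Measure.map_apply (measurable_pi_lambda _ fun i : s => hZ (i : ℕ)) hS,
    tuple_law Q Z hZ hindep hid s τ (hτ.injOn)]
  exact congrFun (congrArg _ (tuple_law Q Z hZ hindep hid s id
    (Function.injective_id.injOn)).symm) S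

end law

/-- If `X = μ₀ + Σₖ λₖ^{1/2} Zₖ φₖ` a.s., with `{φₖ}` orthonormal,
`λₖ > 0`, `Σₖ λₖ < ∞`, and the `Zₖ` independent, identically distributed and symmetric
about 0, then `λⱼ = λₖ` implies
`E_P[w_P(X)⟨φⱼ, X − μ₀⟩²] = E_P[w_P(X)⟨φₖ, X − μ₀⟩²]`, i.e. equal eigenvalues of the
expansion yield equal trimmed eigenvalues `λ̃ⱼ = λ̃ₖ`. -/
theorem trimmed_eigenvalues_of_equal_eigenvalues
    {H : Type*} [NormedAddCommGroup H] [InnerProductSpace ℝ H] [CompleteSpace H]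
    [SecondCountableTopology H] [MeasurableSpace H] [BorelSpace H]
    {Ω : Type*} [MeasurableSpace Ω] (Q : Measure Ω) [IsProbabilityMeasure Q]
    (X : Ω → H) (hX : Measurable X)
    (Z : ℕ → Ω → ℝ) (hZ : ∀ k, Measurable (Z k))
    (hindep : ProbabilityTheory.iIndepFun Z Q)
    (hsymZ : ∀ k, Measure.map (Z k) Q = Measure.map (fun ω => -Z k ω) Q)
    (φ : ℕ → H) (hφ : Orthonormal ℝ φ)
    (lam : ℕ → ℝ) (hlam : ∀ k, 0 < lam k) (hlamsum : Summable lam)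
    (μ₀ : H)
    (hexp : ∀ᵐ ω ∂Q, HasSum (fun k => (Real.sqrt (lam k) * Z k ω) • φ k) (X ω - μ₀))
    (P : Measure H) (hP : P = Measure.map X Q)
    (α β : ℝ) (hα : 0 < α) (hα' : α ≤ 1 / 2) (hβ : 0 < β) (hβ' : β ≤ 1 / 2)
    (g : ℝ → ℝ)
    (hg_nonneg : ∀ t ∈ Set.Icc (0 : ℝ) 1, 0 ≤ g t)
    (hg_bdd : BddAbove (g '' Set.Icc (0 : ℝ) 1))
    (hg_mono : AntitoneOn g (Set.Icc (0 : ℝ) 1))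
    (hg_pos : ∀ t ∈ Set.Icc (0 : ℝ) 1, t < 1 - β → 0 < g t)
    (hg_zero : ∀ t ∈ Set.Icc (0 : ℝ) 1, 1 - β ≤ t → g t = 0)
    (hid : ∀ j k : ℕ, Measure.map (Z j) Q = Measure.map (Z k) Q) :
    ∀ j k : ℕ, lam j = lam k →
      ∫ x, wpop g α P x * ⟪φ j, x - μ₀⟫ ^ 2 ∂P =
        ∫ x, wpop g α P x * ⟪φ k, x - μ₀⟫ ^ 2 ∂P := by
  intro j k hjk
  rcases eq_or_ne j k with rfl | hne
  · rfl
  -- orthonormality facts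
  have hjj : ⟪φ j, φ j⟫ = 1 := by
    rw [real_inner_self_eq_norm_sq, hφ.1 j]; norm_num
  have hkk : ⟪φ k, φ k⟫ = 1 := by
    rw [real_inner_self_eq_norm_sq, hφ.1 k]; norm_num
  have hjk0 : ⟪φ j, φ k⟫ = 0 := hφ.2 hne
  have hkj0 : ⟪φ k, φ j⟫ = 0 := hφ.2 (Ne.symm hne)
  set L : H →L[ℝ] H := swapL (φ j) (φ k) with hLdef
  set T : H → H := fun x => μ₀ + L (x - μ₀) with hTdef
  have hTT : ∀ x, T (T x) = x := by
    intro x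
    simp only [hTdef]
    rw [add_sub_cancel_left, hLdef, swapL_swapL hjj hkk hjk0 hkj0]
    abel
  have hTcont : Continuous T := by
    simp only [hTdef]
    exact continuous_const.add (L.continuous.comp (continuous_id.sub continuous_const))
  set Te : H ≃ᵐ H := ⟨⟨T, T, hTT, hTT⟩, hTcont.measurable, hTcont.measurable⟩ with hTe
  have hTeT : ⇑Te = T := rfl
  set σ : Equiv.Perm ℕ := Equiv.swap j k with hσdef
  have hσlam : ∀ i, lam (σ i) = lam i := by
    intro i
    rcases eq_or_ne i j with rfl | hij
    · rw [hσdef]; simp [Equiv.swap_apply_left, hjk.symm]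
    rcases eq_or_ne i k with rfl | hik
    · rw [hσdef]; simp [Equiv.swap_apply_right, hjk]
    · rw [hσdef, Equiv.swap_apply_of_ne_of_ne hij hik]
  have hLφ : ∀ i, L (φ (σ i)) = φ i := by
    intro i
    rcases eq_or_ne i j with rfl | hij
    · rw [hσdef]
      simp only [Equiv.swap_apply_left]
      exact swapL_snd hkk hjk0
    rcases eq_or_ne i k with rfl | hik
    · rw [hσdef]
      simp only [Equiv.swap_apply_right]
      exact swapL_fst hjj hkj0
    · rw [hσdef, Equiv.swap_apply_of_ne_of_ne hij hik]
      exact swapL_ortho (hφ.2 (Ne.symm hij)) (hφ.2 (Ne.symm hik))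
  set Zseq : Ω → ℕ → ℝ := fun ω i => Z i ω with hZseqdef
  set Zseq' : Ω → ℕ → ℝ := fun ω i => Z (σ i) ω with hZseq'def
  have hZseq : Measurable Zseq := measurable_pi_lambda _ fun i => hZ i
  have hZseq' : Measurable Zseq' := measurable_pi_lambda _ fun i => hZ (σ i)
  have hlaw : Measure.map Zseq' Q = Measure.map Zseq Q :=
    seq_law Q Z hZ hindep hid σ (Equiv.injective σ)
  set Sn : ℕ → (ℕ → ℝ) → H :=
    fun n z => ∑ i ∈ Finset.range n, (Real.sqrt (lam i) * z i) • φ i with hSndef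
  have hSnmeas : ∀ n, Measurable (Sn n) := by
    intro n
    exact Finset.measurable_sum _ fun i _ =>
      (measurable_const.mul (measurable_pi_apply i)).smul_const (φ i)
  have hνtend : ∀ᵐ z ∂(Measure.map Zseq Q),
      ∃ c, Filter.Tendsto (fun n => Sn n z) Filter.atTop (nhds c) := by
    rw [MeasureTheory.ae_map_iff hZseq.aemeasurable (measurableSet_exists_tendsto hSnmeas)]
    filter_upwards [hexp] with ω h
    exact ⟨X ω - μ₀, h.tendsto_sum_nat⟩
  obtain ⟨F₀, hF₀meas, hF₀tend⟩ :=
    measurable_limit_of_tendsto_metrizable_ae (fun n => (hSnmeas n).aemeasurable) hνtend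
  have hX0 : X =ᵐ[Q] fun ω => μ₀ + F₀ (Zseq ω) := by
    have h1 := ae_of_ae_map hZseq.aemeasurable hF₀tend
    filter_upwards [hexp, h1] with ω hs ht
    have h2 : X ω - μ₀ = F₀ (Zseq ω) := tendsto_nhds_unique hs.tendsto_sum_nat ht
    rw [← h2]; abel
  have hTX : (fun ω => T (X ω)) =ᵐ[Q] fun ω => μ₀ + F₀ (Zseq' ω) := by
    have h1 : ∀ᵐ z ∂(Measure.map Zseq' Q),
        Filter.Tendsto (fun n => Sn n z) Filter.atTop (nhds (F₀ z)) := by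
      rw [hlaw]; exact hF₀tend
    have h2 := ae_of_ae_map hZseq'.aemeasurable h1
    filter_upwards [hexp, h2] with ω hs ht
    have hsum : HasSum (fun i => (Real.sqrt (lam i) * Z (σ i) ω) • φ i) (L (X ω - μ₀)) := by
      have h3 : HasSum (fun i => (Real.sqrt (lam i) * Z i ω) • L (φ i)) (L (X ω - μ₀)) := by
        simpa only [_root_.map_smul] using hs.mapL L
      have h4 := (Equiv.hasSum_iff σ).2 h3
      have hfe : (fun i => (Real.sqrt (lam i) * Z (σ i) ω) • φ i)
          = (fun i => (Real.sqrt (lam i) * Z i ω) • L (φ i)) ∘ σ := by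
        funext i
        rw [Function.comp_apply, hσlam i, hLφ i]
      rw [hfe]; exact h4
    have h5 : L (X ω - μ₀) = F₀ (Zseq' ω) := tendsto_nhds_unique hsum.tendsto_sum_nat ht
    simp only [hTdef]
    rw [h5]
  have m1 : Measurable (fun z : ℕ → ℝ => μ₀ + F₀ z) := hF₀meas.const_add μ₀
  have hmapT : Measure.map T P = P := by
    calc Measure.map T P = Measure.map T (Measure.map X Q) := by rw [hP]
      _ = Measure.map (fun ω => T (X ω)) Q := Measure.map_map hTcont.measurable hX
      _ = Measure.map (fun ω => μ₀ + F₀ (Zseq' ω)) Q := Measure.map_congr hTX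
      _ = Measure.map (fun z => μ₀ + F₀ z) (Measure.map Zseq' Q) :=
          (Measure.map_map m1 hZseq').symm
      _ = Measure.map (fun z => μ₀ + F₀ z) (Measure.map Zseq Q) := by rw [hlaw]
      _ = Measure.map (fun ω => μ₀ + F₀ (Zseq ω)) Q := Measure.map_map m1 hZseq
      _ = Measure.map X Q := (Measure.map_congr hX0).symm
      _ = P := hP.symm
  have hFpop : ∀ t v, Fpop P t (T v) = Fpop P t v := by
    intro t v
    unfold Fpop
    congr 1
    calc P {x | ‖x - T v‖ ≤ t} = Measure.map (⇑Te) P {x | ‖x - T v‖ ≤ t} := by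
          rw [hTeT, hmapT]
      _ = P (Te ⁻¹' {x | ‖x - T v‖ ≤ t}) := MeasurableEquiv.map_apply Te _
      _ = P {x | ‖x - v‖ ≤ t} := by
          congr 1
          ext x
          simp only [Set.mem_preimage, Set.mem_setOf_eq, hTeT]
          have hdiff : T x - T v = L (x - v) := by
            calc T x - T v = L (x - μ₀) - L (v - μ₀) := by simp only [hTdef]; abel
              _ = L ((x - μ₀) - (v - μ₀)) := (map_sub L _ _).symm
              _ = L (x - v) := by congr 1; abel
          rw [hdiff, hLdef, norm_swapL hjj hkk hjk0 hkj0]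
  have hrpop : ∀ v, rpop α P (T v) = rpop α P v := by
    intro v
    unfold rpop
    congr 1
    ext t
    simp only [Set.mem_setOf_eq, hFpop]
  have hwpop : ∀ v, wpop g α P (T v) = wpop g α P v := by
    intro v
    unfold wpop
    rw [hrpop]
  have hinner : ∀ x, ⟪φ j, T x - μ₀⟫ = ⟪φ k, x - μ₀⟫ := by
    intro x
    simp only [hTdef]
    rw [add_sub_cancel_left, hLdef]
    exact inner_swapL_left hjj hjk0 _
  calc ∫ x, wpop g α P x * ⟪φ j, x - μ₀⟫ ^ 2 ∂P
      = ∫ x, wpop g α P x * ⟪φ j, x - μ₀⟫ ^ 2 ∂(Measure.map (⇑Te) P) := by rw [hTeT, hmapT]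
    _ = ∫ x, wpop g α P (Te x) * ⟪φ j, Te x - μ₀⟫ ^ 2 ∂P :=
        MeasureTheory.integral_map_equiv Te _
    _ = ∫ x, wpop g α P x * ⟪φ k, x - μ₀⟫ ^ 2 ∂P := by
        refine integral_congr_ae (Filter.EventuallyEq.of_eq (funext fun x => ?_))
        rw [show Te x = T x from rfl, hwpop, hinner]
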